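/- Let α ∈ P(X) with α ≠ 0. Then there exists a unique set C of pairwise completely disjoint, connected partial transformations, each contained in α, such that α is the join of the elements of C. -/

import Mathlib

namespace ConjPaper

open Classical

/-- Partial transformations of `X`. -/
abbrev PT (X : Type*) := X → Option X

variable {X : Type*}

/-- Left-to-right composition: `x(αφ) = (xα)φ`. -/
def pcomp (α φ : PT X) : PT X := fun x => (α x).bind φ

/-- The zero of `P(X)`: the empty transformation. -/
def pzero : PT X := fun _ => none

/-- The identity of `P(X)`. -/
def pid : PT X := fun x => some x

/-- The domain of a partial transformation. -/
def pdom (α : PT X) : Set X := {x | α x ≠ none}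

/-- The image of a partial transformation. -/
def pim (α : PT X) : Set X := {y | ∃ x, α x = some y}

/-- The span: `dom(α) ∪ im(α)`. -/
def pspan (α : PT X) : Set X := pdom α ∪ pim α

/-- Iterates `γ^k` of a partial transformation (`γ^0 = id`). -/
def pit (α : PT X) : ℕ → PT X
  | 0 => pid
  | n + 1 => pcomp (pit α n) α

/-- `φ` is a restrictive partial homomorphism (rp-homomorphism) from `Γ(α)` to `Γ(β)`:
(a) every arc `x → y` of `Γ(α)` has `x, y ∈ dom(φ)` and `xφ → yφ` an arc of `Γ(β)`;
(b) if `x` is terminal in `Γ(α)` and `x ∈ dom(φ)`, then `xφ` is terminal in `Γ(β)`. -/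
def IsRpHom (α β φ : PT X) : Prop :=
  (∀ x y, α x = some y →
    ∃ x' y', φ x = some x' ∧ φ y = some y' ∧ β x' = some y') ∧
  (∀ x x', α x = none → φ x = some x' → β x' = none)

/-- `γ` is connected: `γ ≠ 0` and any two points of `span(γ)` reach a common point
under nonnegative iterates of `γ`. -/
def Connected (γ : PT X) : Prop :=
  γ ≠ pzero ∧ ∀ x ∈ pspan γ, ∀ y ∈ pspan γ,
    ∃ k m z, pit γ k x = some z ∧ pit γ m y = some z

/-! ### Auxiliary machinery -/

lemma pit_succ' (α : PT X) (n : ℕ) (x : X) :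
    pit α (n+1) x = (pit α n x).bind α := rfl

lemma pit_add (α : PT X) (a b : ℕ) (x : X) :
    pit α (a + b) x = (pit α a x).bind (pit α b) := by
  induction b with
  | zero => cases h : pit α a x <;> simp [pit, pid, h]
  | succ b ih =>
      show pit α (a + b + 1) x = _
      rw [pit_succ', ih]
      cases h : pit α a x <;> simp [pit_succ', pit, pcomp]

/-- `u` and `v` reach a common point under iterates of `α`. -/
def Rel (α : PT X) (u v : X) : Prop :=
  ∃ k m z, pit α k u = some z ∧ pit α m v = some z

lemma Rel.refl (α : PT X) (u : X) : Rel α u u := ⟨0, 0, u, rfl, rfl⟩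

lemma Rel.symm {α : PT X} {u v : X} (h : Rel α u v) : Rel α v u := by
  obtain ⟨k, m, z, h1, h2⟩ := h; exact ⟨m, k, z, h2, h1⟩

lemma Rel.trans {α : PT X} {u v w : X} (h : Rel α u v) (h' : Rel α v w) :
    Rel α u w := by
  obtain ⟨k, m, z, h1, h2⟩ := h
  obtain ⟨k', m', z', h3, h4⟩ := h'
  rcases le_total m k' with hle | hle
  · obtain ⟨d, rfl⟩ := Nat.exists_eq_add_of_le hle
    rw [pit_add, h2, Option.bind_some] at h3
    refine ⟨k + d, m', z', ?_, h4⟩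
    rw [pit_add, h1, Option.bind_some]; exact h3
  · obtain ⟨d, rfl⟩ := Nat.exists_eq_add_of_le hle
    rw [pit_add, h3, Option.bind_some] at h2
    refine ⟨k, m' + d, z, h1, ?_⟩
    rw [pit_add, h4, Option.bind_some]; exact h2

lemma rel_of_pit {α : PT X} {u z : X} {k : ℕ} (h : pit α k u = some z) :
    Rel α z u := ⟨0, k, z, rfl, h⟩

/-- The restriction of `α` to the `Rel`-class of `x`. -/
noncomputable def restr (α : PT X) (x : X) : PT X :=
  fun u => if Rel α u x then α u else none

lemma restr_eq {α : PT X} {u x : X} (h : Rel α u x) : restr α x u = α u :=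
  if_pos h

lemma restr_none {α : PT X} {u x : X} (h : ¬ Rel α u x) : restr α x u = none :=
  if_neg h

lemma restr_sub {α : PT X} {u v x : X} (h : restr α x u = some v) :
    α u = some v := by
  unfold restr at h
  split at h
  · exact h
  · exact absurd h (by simp)

lemma rel_of_mem_span_restr {α : PT X} {u x : X}
    (h : u ∈ pspan (restr α x)) : Rel α u x := by
  rcases h with h | h
  · by_contra hn
    exact h (restr_none hn)
  · obtain ⟨w, hw⟩ := h
    by_cases hwx : Rel α w x
    · rw [restr_eq hwx] at hw
      exact (rel_of_pit (k := 1) (by simpa [pit, pcomp, pid] using hw)).trans hwx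
    · rw [restr_none hwx] at hw
      exact absurd hw (by simp)

lemma restr_congr {α : PT X} {x y : X} (h : Rel α x y) :
    restr α x = restr α y := by
  funext u
  by_cases hu : Rel α u x
  · rw [restr_eq hu, restr_eq (hu.trans h)]
  · rw [restr_none hu, restr_none (fun hc => hu (hc.trans h.symm))]

lemma pit_restr {α : PT X} {u x : X} (h : Rel α u x) (k : ℕ) :
    pit (restr α x) k u = pit α k u := by
  induction k with
  | zero => rfl
  | succ k ih =>
      rw [pit_succ', pit_succ', ih]
      cases hk : pit α k u with
      | none => rfl
      | some w =>
          simp only [Option.bind_some]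
          exact restr_eq ((rel_of_pit hk).trans h)

lemma pit_mono {α δ : PT X} (hsub : ∀ x y, δ x = some y → α x = some y)
    {k : ℕ} {u z : X} (h : pit δ k u = some z) : pit α k u = some z := by
  induction k generalizing z with
  | zero => exact h
  | succ k ih =>
      rw [pit_succ'] at h ⊢
      obtain ⟨w, hw, hwz⟩ := Option.bind_eq_some_iff.mp h
      rw [ih hw, Option.bind_some]
      exact hsub w z hwz

lemma mem_span_pit {β : PT X} {u z : X} {k : ℕ}
    (h : pit β k u = some z) (hu : u ∈ pspan β) : z ∈ pspan β := by
  cases k with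
  | zero => cases h; exact hu
  | succ k =>
      rw [pit_succ'] at h
      obtain ⟨w, _, hwz⟩ := Option.bind_eq_some_iff.mp h
      exact Or.inr ⟨w, hwz⟩

lemma connected_restr {α : PT X} {x : X} (hx : α x ≠ none) :
    Connected (restr α x) := by
  constructor
  · intro hc
    apply hx
    have : restr α x x = pzero x := by rw [hc]
    rwa [restr_eq (Rel.refl α x)] at this
  · intro u hu v hv
    have hux := rel_of_mem_span_restr hu
    have hvx := rel_of_mem_span_restr hv
    obtain ⟨k, m, z, hk, hm⟩ := hux.trans hvx.symm
    exact ⟨k, m, z, by rw [pit_restr hux]; exact hk,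
      by rw [pit_restr hvx]; exact hm⟩

lemma unique_comp {α : PT X} {C' : Set (PT X)}
    (h1 : ∀ γ ∈ C', Connected γ ∧ ∀ x y, γ x = some y → α x = some y)
    (h2 : ∀ γ ∈ C', ∀ δ ∈ C', γ ≠ δ → pspan γ ∩ pspan δ = ∅)
    (h3 : ∀ x y, α x = some y ↔ ∃ γ ∈ C', γ x = some y)
    {δ : PT X} (hδ : δ ∈ C') {x : X} (hx : δ x ≠ none) :
    δ = restr α x := by
  have closure : ∀ β ∈ C', ∀ w ∈ pspan β, ∀ w', α w = some w' → β w = some w' := by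
    intro β hβ w hw w' hww'
    obtain ⟨β', hβ', hb⟩ := (h3 w w').mp hww'
    have hbb : β' = β := by
      by_contra hne
      have hdisj := h2 β' hβ' β hβ hne
      have : w ∈ pspan β' ∩ pspan β :=
        ⟨Or.inl (by simp [pdom, hb]), hw⟩
      rw [hdisj] at this
      exact this
    rw [← hbb]; exact hb
  have pitclosure : ∀ m, ∀ β ∈ C', ∀ w ∈ pspan β, ∀ z,
      pit α m w = some z → pit β m w = some z := by
    intro m
    induction m with
    | zero => intro β _ w _ z h; exact h
    | succ m ih =>
        intro β hβ w hw z h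
        rw [pit_succ'] at h ⊢
        obtain ⟨w', hw', hwz⟩ := Option.bind_eq_some_iff.mp h
        have hbw : pit β m w = some w' := ih β hβ w hw w' hw'
        rw [hbw, Option.bind_some]
        exact closure β hβ w' (mem_span_pit hbw hw) z hwz
  have hsub := (h1 δ hδ).2
  funext u
  by_cases hru : Rel α u x
  · rw [restr_eq hru]
    cases hαu : α u with
    | none =>
        cases hδu : δ u with
        | none => rfl
        | some v => exact absurd (hsub u v hδu) (by simp [hαu])
    | some v =>
        obtain ⟨δ', hδ', hv⟩ := (h3 u v).mp hαu
        have hdd : δ' = δ := by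
          by_contra hne
          obtain ⟨k, m, z, hk, hm⟩ := hru
          have hz1 : z ∈ pspan δ' :=
            mem_span_pit (pitclosure k δ' hδ' u (Or.inl (by simp [pdom, hv])) z hk)
              (Or.inl (by simp [pdom, hv]))
          have hz2 : z ∈ pspan δ :=
            mem_span_pit (pitclosure m δ hδ x (Or.inl hx) z hm) (Or.inl hx)
          have hdisj := h2 δ' hδ' δ hδ hne
          have : z ∈ pspan δ' ∩ pspan δ := ⟨hz1, hz2⟩
          rw [hdisj] at this
          exact this
        rw [← hdd]; exact hv
  · rw [restr_none hru]
    cases hδu : δ u with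
    | none => rfl
    | some v =>
        exfalso
        apply hru
        obtain ⟨-, hc⟩ := (h1 δ hδ).1
        obtain ⟨k, m, z, hk, hm⟩ :=
          hc u (Or.inl (by simp [pdom, hδu])) x (Or.inl hx)
        exact ⟨k, m, z, pit_mono hsub hk, pit_mono hsub hm⟩

/-- Proposition 4.5. Every nonzero `α ∈ P(X)` is, in a unique way,
the join of a set of pairwise completely disjoint connected partial transformations
contained in `α`. -/
theorem exists_unique_connected_components (α : PT X) (hα : α ≠ pzero) :
    ∃! C : Set (PT X),
      (∀ γ ∈ C, Connected γ ∧ ∀ x y, γ x = some y → α x = some y) ∧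
      (∀ γ ∈ C, ∀ δ ∈ C, γ ≠ δ → pspan γ ∩ pspan δ = ∅) ∧
      (∀ x y, α x = some y ↔ ∃ γ ∈ C, γ x = some y) := by
  refine ⟨{γ | ∃ x, α x ≠ none ∧ γ = restr α x}, ⟨?_, ?_, ?_⟩, ?_⟩
  · rintro γ ⟨x, hx, rfl⟩
    exact ⟨connected_restr hx, fun u v h => restr_sub h⟩
  · rintro γ ⟨x, hx, rfl⟩ δ ⟨y, hy, rfl⟩ hne
    ext u
    simp only [Set.mem_inter_iff, Set.mem_empty_iff_false, iff_false, not_and]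
    intro hu hv
    exact hne (restr_congr ((rel_of_mem_span_restr hu).symm.trans
      (rel_of_mem_span_restr hv)))
  · intro x y
    constructor
    · intro h
      exact ⟨restr α x, ⟨x, by simp [h], rfl⟩,
        by rw [restr_eq (Rel.refl α x)]; exact h⟩
    · rintro ⟨γ, ⟨z, hz, rfl⟩, h⟩
      exact restr_sub h
  · rintro C' ⟨h1, h2, h3⟩
    ext γ
    constructor
    · intro hγ
      obtain ⟨hcon, hsub⟩ := h1 γ hγ
      have : ∃ x, γ x ≠ none := by
        by_contra hc
        push_neg at hc
        exact hcon.1 (funext fun u => by simp [hc u, pzero])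
      obtain ⟨x, hx⟩ := this
      obtain ⟨v, hv⟩ := Option.ne_none_iff_exists'.mp hx
      refine ⟨x, by simp [hsub x v hv], unique_comp h1 h2 h3 hγ hx⟩
    · rintro ⟨x, hx, rfl⟩
      obtain ⟨y, hy⟩ := Option.ne_none_iff_exists'.mp hx
      obtain ⟨δ, hδ, hδx⟩ := (h3 x y).mp hy
      have : δ = restr α x := unique_comp h1 h2 h3 hδ (by simp [hδx])
      rw [← this]; exact hδ

end ConjPaper
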